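/- Let a ≥ 2, d ≥ 2, k, m be positive integers. If there exists a prime p dividing a^{kd} - 1 with ord_p(a) = kd, and (a^m - 1)(a^{kd} - 1) divides (a^{md} - 1)(a^k - 1), then k divides m. -/
import Mathlib

lemma dvd_pow_sub_one_iff (a n p : ℕ) [NeZero p] (h1 : 1 ≤ a ^ n) :
    p ∣ a ^ n - 1 ↔ (a : ZMod p) ^ n = 1 := by
  rw [← ZMod.natCast_eq_zero_iff, Nat.cast_sub h1, Nat.cast_pow, Nat.cast_one,
    sub_eq_zero]

theorem stmt_9 (a d k m : ℕ) (ha : 2 ≤ a) (hd : 2 ≤ d) (hk : 0 < k) (hm : 0 < m)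
    (p : ℕ) (hp : p.Prime) (hpd : p ∣ a ^ (k * d) - 1)
    (hord : orderOf (a : ZMod p) = k * d)
    (hdvd : (a ^ m - 1) * (a ^ (k * d) - 1) ∣ (a ^ (m * d) - 1) * (a ^ k - 1)) :
    k ∣ m := by
  have hp' : Fact p.Prime := ⟨hp⟩
  have hpow : ∀ n : ℕ, 1 ≤ a ^ n := fun n => Nat.one_le_pow n a (by omega)
  have hpr : p ∣ (a ^ (m * d) - 1) * (a ^ k - 1) :=
    dvd_trans (dvd_trans hpd (dvd_mul_left _ _)) hdvd
  rcases (hp.dvd_mul.mp hpr) with h | h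
  · have : (k * d) ∣ m * d := by
      rw [← hord]
      exact orderOf_dvd_of_pow_eq_one ((dvd_pow_sub_one_iff a (m * d) p (hpow _)).mp h)
    exact (Nat.mul_dvd_mul_iff_right (by omega : 0 < d)).mp this
  · exfalso
    have hkd : (k * d) ∣ k := by
      rw [← hord]
      exact orderOf_dvd_of_pow_eq_one ((dvd_pow_sub_one_iff a k p (hpow _)).mp h)
    have := Nat.le_of_dvd hk hkd
    nlinarith
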